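/- Suppose K → G₁ → G₀ → A is an exact complex of R-modules (i.e., there are short exact sequences 0 → K → G₁ → K₁ → 0 and 0 → K₁ → G₀ → A → 0) with G₀ and G₁ quasi-Gorenstein projective. Then there exists an exact complex K → P₀ → G₀' → A with P₀ projective and G₀' quasi-Gorenstein projective. -/

import Mathlib

open CategoryTheory

universe u
variable {R : Type u} [Ring R]

/-- A module `Q` is quasi-projective if every homomorphism from `Q` to a quotient
of `Q` lifts to an endomorphism of `Q`. -/
def QuasiProjective (Q : ModuleCat.{u} R) : Prop :=
  ∀ (B : ModuleCat.{u} R) (g : Q ⟶ B), Function.Surjective g →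
    ∀ f : Q ⟶ B, ∃ h : Q ⟶ Q, h ≫ g = f

/-- `M` is quasi-Gorenstein projective if it is a syzygy of an exact complex of
projective modules (given by short exact sequences `0 → K (n+1) → P n → K n → 0`)
that remains exact under `Hom(-, Q)` for every quasi-projective module `Q`. -/
def QuasiGorensteinProjective (M : ModuleCat.{u} R) : Prop :=
  ∃ (K P : ℤ → ModuleCat.{u} R) (ι : ∀ n, K (n + 1) ⟶ P n) (π : ∀ n, P n ⟶ K n),
    (∀ n, Module.Projective R (P n)) ∧
    (∀ n, Function.Injective (ι n)) ∧
    (∀ n, Function.Surjective (π n)) ∧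
    (∀ n, Function.Exact (ι n) (π n)) ∧
    (∀ n (Q : ModuleCat.{u} R), QuasiProjective Q →
      ∀ f : K (n + 1) ⟶ Q, ∃ g : P n ⟶ Q, ι n ≫ g = f) ∧
    Nonempty (M ≅ K 0)

namespace QGPAux

lemma comp_app {A B C : ModuleCat.{u} R} (f : A ⟶ B) (g : B ⟶ C) (x : A) :
    (f ≫ g) x = g (f x) := rfl

lemma factor_surj {A B C : ModuleCat.{u} R} (φ : A ⟶ B) (ψ : A ⟶ C)
    (hφ : Function.Surjective φ) (h : ∀ a, φ a = 0 → ψ a = 0) :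
    ∃ F : B ⟶ C, φ ≫ F = ψ := by
  let e := LinearMap.quotKerEquivOfSurjective φ.hom hφ
  have h' : LinearMap.ker φ.hom ≤ LinearMap.ker ψ.hom := fun a ha => h a ha
  refine ⟨ModuleCat.ofHom ((Submodule.liftQ _ ψ.hom h').comp (e.symm : B →ₗ[R] _)), ?_⟩
  ext a
  have h1 : e (Submodule.Quotient.mk a) = φ a := rfl
  have h2 : e.symm (φ a) = Submodule.Quotient.mk a := by
    rw [← h1, LinearEquiv.symm_apply_apply]
  show (Submodule.liftQ _ _ h') (e.symm (φ a)) = ψ a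
  rw [h2, Submodule.liftQ_apply]

lemma factor_inj {A B C : ModuleCat.{u} R} (j : B ⟶ C) (hj : Function.Injective j)
    (ψ : A ⟶ C) (h : ∀ x, ψ x ∈ Set.range j) :
    ∃ s : A ⟶ B, s ≫ j = ψ := by
  have h' : ∀ x, ψ x ∈ LinearMap.range j.hom := h
  let e := LinearEquiv.ofInjective j.hom hj
  refine ⟨ModuleCat.ofHom ((e.symm : _ →ₗ[R] B).comp
    (LinearMap.codRestrict (LinearMap.range j.hom) ψ.hom h')), ?_⟩
  ext a
  show j (e.symm ⟨ψ a, h' a⟩) = ψ a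
  have h2 : ∀ b : B, (e b : C) = j b := fun b => rfl
  rw [← h2]
  exact congrArg Subtype.val (e.apply_symm_apply ⟨ψ a, h' a⟩)

lemma quasiProjective_of_projective (Q : ModuleCat.{u} R) (h : Module.Projective R Q) :
    QuasiProjective Q := by
  intro B g hg f
  obtain ⟨h', hh⟩ := Module.projective_lifting_property g.hom f.hom hg
  refine ⟨ModuleCat.ofHom h', ?_⟩
  ext x
  show g (h' x) = f x
  exact LinearMap.congr_fun hh x

/-- A short exact sequence `0 → A → B → C → 0`. -/
structure Ses (A B C : ModuleCat.{u} R) : Type u where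
  i : A ⟶ B
  p : B ⟶ C
  inj : Function.Injective i
  surj : Function.Surjective p
  exact : Function.Exact i p

/-- One step of a complete quasi-projective resolution: a short exact sequence
`0 → Y → P → X → 0` with `P` projective, such that maps from `Y` to any
quasi-projective module extend to `P`. -/
structure Step (X Y : ModuleCat.{u} R) : Type (u + 1) where
  P : ModuleCat.{u} R
  hP : Module.Projective R P
  ι : Y ⟶ P
  π : P ⟶ X
  inj : Function.Injective ι
  surj : Function.Surjective π
  exact : Function.Exact ι π
  ext : ∀ Q : ModuleCat.{u} R, QuasiProjective Q → ∀ f : Y ⟶ Q, ∃ g : P ⟶ Q, ι ≫ g = f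

end QGPAux
namespace QGPAux
variable {R : Type u} [Ring R]

lemma congr_app {A B : ModuleCat.{u} R} {f g : A ⟶ B} (h : f = g) (x : A) : f x = g x :=
  by rw [h]

lemma inj_zero {A B : ModuleCat.{u} R} {f : A ⟶ B} (hf : Function.Injective f)
    {x : A} (h : f x = 0) : x = 0 :=
  hf (by rw [h, map_zero])

/-- Maps from `Y'` to a quasi-projective `Q` extend along `F.i : Y' → Y`, provided the
cokernel `Y''` admits a step `0 → Z'' → P → Y'' → 0` (i.e. `Ext¹(Y'', Q) = 0`). -/
lemma extend_along {Y' Y Y'' Z'' : ModuleCat.{u} R} (F : Ses Y' Y Y'') (S : Step Y'' Z'')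
    (Q : ModuleCat.{u} R) (hQ : QuasiProjective Q) (f : Y' ⟶ Q) :
    ∃ F' : Y ⟶ Q, F.i ≫ F' = f := by
  haveI := S.hP
  obtain ⟨t, ht⟩ := Module.projective_lifting_property F.p.hom
    S.π.hom F.surj
  have htp : ∀ p : S.P, F.p (t p) = S.π p := fun p => LinearMap.congr_fun ht p
  have hs : ∀ z, (t.comp S.ι.hom) z ∈ Set.range F.i := by
    intro z
    refine (F.exact _).mp ?_
    show F.p (t (S.ι z)) = 0
    rw [htp, S.exact.apply_apply_eq_zero]
  obtain ⟨s, hsc⟩ := factor_inj F.i F.inj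
    (show (Z'' : ModuleCat.{u} R) ⟶ Y from ModuleCat.ofHom (t.comp S.ι.hom)) hs
  have hscp : ∀ z, F.i (s z) = t (S.ι z) := fun z => congr_app hsc z
  obtain ⟨g, hg⟩ := S.ext Q hQ (s ≫ f)
  have hgp : ∀ z, g (S.ι z) = f (s z) := fun z => congr_app hg z
  have hφsurj : Function.Surjective
      (show ModuleCat.of R (Y' × S.P) ⟶ Y from ModuleCat.ofHom (LinearMap.coprod F.i.hom t)) := by
    intro y
    obtain ⟨p, hp⟩ := S.surj (F.p y)
    have h0 : F.p (y - t p) = 0 := by rw [map_sub, htp, hp, sub_self]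
    obtain ⟨y', hy'⟩ := (F.exact _).mp h0
    refine ⟨(y', p), ?_⟩
    show F.i y' + t p = y
    rw [hy']; abel
  have hker : ∀ v : ModuleCat.of R (Y' × S.P),
      (show ModuleCat.of R (Y' × S.P) ⟶ Y from ModuleCat.ofHom (LinearMap.coprod F.i.hom t)) v = 0 →
      (show ModuleCat.of R (Y' × S.P) ⟶ Q from ModuleCat.ofHom (LinearMap.coprod f.hom g.hom)) v = 0 := by
    rintro ⟨y', p⟩ hv
    have hv' : F.i y' + t p = 0 := hv
    have h1 : S.π p = 0 := by
      have h2 := congrArg F.p hv'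
      rw [map_add, map_zero, htp, F.exact.apply_apply_eq_zero, zero_add] at h2
      exact h2
    obtain ⟨z, hz⟩ := (S.exact _).mp h1
    have h3 : y' = -(s z) := by
      have h4 : F.i (y' + s z) = 0 := by rw [map_add, hscp, hz]; exact hv'
      have h5 := inj_zero F.inj h4
      exact eq_neg_of_add_eq_zero_left h5
    show f y' + g p = 0
    rw [h3, ← hz, hgp, map_neg, neg_add_cancel]
  obtain ⟨F', hF'⟩ := factor_surj _ _ hφsurj hker
  refine ⟨F', ?_⟩
  ext y'
  have := congr_app hF' (show ModuleCat.of R (Y' × S.P) from (y', 0))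
  show F' (F.i y') = f y'
  have h6 : F.i y' = (LinearMap.coprod F.i.hom t) (y', (0 : S.P)) := by
    show F.i y' = F.i y' + t 0; rw [map_zero, add_zero]
  rw [h6]
  refine this.trans ?_
  show f y' + g 0 = f y'
  rw [map_zero, add_zero]

end QGPAux
namespace QGPAux
variable {R : Type u} [Ring R]

/-- Forward horseshoe step: given steps over `X'` and `X''` and an extension
`0 → X' → X → X'' → 0`, produce a step over `X` whose syzygy is an extension of the
syzygies. -/
lemma stepA {X' Y' X'' Y'' X : ModuleCat.{u} R}
    (S' : Step X' Y') (S'' : Step X'' Y'') (E : Ses X' X X'') :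
    Nonempty (Σ' (Y : ModuleCat.{u} R) (_ : Ses Y' Y Y''), Step X Y) := by
  haveI := S''.hP
  haveI := S'.hP
  obtain ⟨t, ht⟩ := Module.projective_lifting_property E.p.hom
    S''.π.hom E.surj
  have htp : ∀ q : S''.P, E.p (t q) = S''.π q := fun q => LinearMap.congr_fun ht q
  set PP : ModuleCat.{u} R := ModuleCat.of R (S'.P × S''.P) with hPP
  set π : PP ⟶ X :=
    ModuleCat.ofHom (LinearMap.coprod (E.i.hom.comp S'.π.hom) t) with hπ
  have hπapp : ∀ v : S'.P × S''.P, π v = E.i (S'.π v.1) + t v.2 := fun v => rfl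
  have hEpπ : ∀ v : S'.P × S''.P, E.p (π v) = S''.π v.2 := by
    intro v
    rw [hπapp, map_add, E.exact.apply_apply_eq_zero, zero_add, htp]
  have hπsurj : Function.Surjective π := by
    intro x
    obtain ⟨q, hq⟩ := S''.surj (E.p x)
    have h0 : E.p (x - t q) = 0 := by rw [map_sub, htp, hq, sub_self]
    obtain ⟨x', hx'⟩ := (E.exact _).mp h0
    obtain ⟨pp, hpp⟩ := S'.surj x'
    refine ⟨(pp, q), ?_⟩
    rw [hπapp]
    show E.i (S'.π pp) + t q = x
    rw [hpp, hx']; abel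
  set Y : ModuleCat.{u} R := ModuleCat.of R (LinearMap.ker π.hom) with hY
  set ι : Y ⟶ PP := ModuleCat.ofHom (LinearMap.ker π.hom).subtype with hι
  have hιinj : Function.Injective ι := Subtype.val_injective
  have hexact : Function.Exact ι π := by
    intro v
    constructor
    · intro hv; exact ⟨⟨v, hv⟩, rfl⟩
    · rintro ⟨⟨w, hw⟩, rfl⟩; exact hw
  -- the map i : Y' → Y
  have hmemi : ∀ y' : Y', ((LinearMap.inl R S'.P S''.P).comp S'.ι.hom) y'
      ∈ LinearMap.ker π.hom := by
    intro y'
    show π ((S'.ι y' : S'.P), (0 : S''.P)) = 0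
    rw [hπapp]
    show E.i (S'.π (S'.ι y')) + t 0 = 0
    rw [S'.exact.apply_apply_eq_zero, map_zero, map_zero, add_zero]
  set i : Y' ⟶ Y := ModuleCat.ofHom (LinearMap.codRestrict (LinearMap.ker π.hom)
    ((LinearMap.inl R S'.P S''.P).comp S'.ι.hom) hmemi) with hi
  have hiapp : ∀ y' : Y', ((i y').1 : S'.P × S''.P) = ((S'.ι y' : S'.P), (0 : S''.P)) :=
    fun y' => rfl
  have hiinj : Function.Injective i := by
    intro u v huv
    have h1 : ((i u).1 : S'.P × S''.P) = ((i v).1 : S'.P × S''.P) := by rw [huv]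
    rw [hiapp, hiapp] at h1
    exact S'.inj (congrArg Prod.fst h1)
  -- the map p : Y → Y''
  have hmem2 : ∀ y : Y, ((LinearMap.snd R S'.P S''.P).comp ι.hom) y
      ∈ Set.range S''.ι := by
    intro y
    refine (S''.exact _).mp ?_
    have h1 : π (y.1 : S'.P × S''.P) = 0 := y.2
    have h2 := hEpπ (y.1 : S'.P × S''.P)
    rw [h1, map_zero] at h2
    exact h2.symm
  obtain ⟨p, hp⟩ := factor_inj S''.ι S''.inj
    (show Y ⟶ S''.P from ModuleCat.ofHom ((LinearMap.snd R S'.P S''.P).comp ι.hom)) hmem2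
  have hpapp : ∀ y : Y, S''.ι (p y) = (y.1 : S'.P × S''.P).2 := fun y => congr_app hp y
  have hpsurj : Function.Surjective p := by
    intro y''
    have h1 : E.p (t (S''.ι y'')) = 0 := by rw [htp, S''.exact.apply_apply_eq_zero]
    obtain ⟨x', hx'⟩ := (E.exact _).mp h1
    obtain ⟨pp, hpp⟩ := S'.surj x'
    have hker : ((-pp : S'.P), (S''.ι y'' : S''.P)) ∈ LinearMap.ker π.hom := by
      show π ((-pp : S'.P), (S''.ι y'' : S''.P)) = 0
      rw [hπapp]
      show E.i (S'.π (-pp)) + t (S''.ι y'') = 0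
      rw [map_neg, map_neg, hpp, hx']; abel
    refine ⟨⟨_, hker⟩, S''.inj ?_⟩
    rw [hpapp]
  have hexact2 : Function.Exact i p := by
    intro y
    constructor
    · intro hy
      have h1 : (y.1 : S'.P × S''.P).2 = 0 := by rw [← hpapp, hy, map_zero]
      have h2 : π (y.1 : S'.P × S''.P) = 0 := y.2
      rw [hπapp] at h2
      rw [h1, map_zero, add_zero] at h2
      have h3 : S'.π (y.1 : S'.P × S''.P).1 = 0 := inj_zero E.inj h2
      obtain ⟨y', hy'⟩ := (S'.exact _).mp h3
      refine ⟨y', ?_⟩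
      apply Subtype.ext
      rw [hiapp]
      exact Prod.ext hy' h1.symm
    · rintro ⟨y', rfl⟩
      apply S''.inj
      rw [hpapp, hiapp, map_zero]
  -- the extension property for the new step
  have hext : ∀ Q : ModuleCat.{u} R, QuasiProjective Q →
      ∀ f : Y ⟶ Q, ∃ g : PP ⟶ Q, ι ≫ g = f := by
    intro Q hQ f
    obtain ⟨g', hg'⟩ := S'.ext Q hQ (i ≫ f)
    have hg'app : ∀ y', g' (S'.ι y') = f (i y') := fun y' => congr_app hg' y'
    set h : Y ⟶ Q :=
      ModuleCat.ofHom (f.hom - g'.hom.comp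
        ((LinearMap.fst R S'.P S''.P).comp ι.hom)) with hh
    have happ : ∀ y : Y, h y = f y - g' (y.1 : S'.P × S''.P).1 := fun y => rfl
    have hh0 : ∀ y, p y = 0 → h y = 0 := by
      intro y hy
      obtain ⟨y', rfl⟩ := (hexact2 y).mp hy
      rw [happ, hiapp]
      show f (i y') - g' (S'.ι y') = 0
      rw [hg'app, sub_self]
    obtain ⟨hbar, hhbar⟩ := factor_surj p h hpsurj hh0
    have hhbarapp : ∀ y, hbar (p y) = h y := fun y => congr_app hhbar y
    obtain ⟨g'', hg''⟩ := S''.ext Q hQ hbar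
    have hg''app : ∀ y'', g'' (S''.ι y'') = hbar y'' := fun y'' => congr_app hg'' y''
    refine ⟨ModuleCat.ofHom (g'.hom.comp (LinearMap.fst R S'.P S''.P)
      + g''.hom.comp (LinearMap.snd R S'.P S''.P)), ?_⟩
    ext y
    show g' (y.1 : S'.P × S''.P).1 + g'' (y.1 : S'.P × S''.P).2 = f y
    rw [← hpapp, hg''app, hhbarapp, happ]
    abel
  exact ⟨⟨Y, ⟨i, p, hiinj, hpsurj, hexact2⟩,
    ⟨PP, (inferInstance : Module.Projective R (S'.P × S''.P)), ι, π, hιinj, hπsurj, hexact, hext⟩⟩⟩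

end QGPAux
namespace QGPAux
variable {R : Type u} [Ring R]

/-- Backward (co-resolution) horseshoe step: given an extension `0 → Y' → Y → Y'' → 0`
of syzygies, embed `Y` into a projective with cokernel an extension of the cokernels. -/
lemma stepB {X' Y' X'' Y'' Z'' Y : ModuleCat.{u} R}
    (S' : Step X' Y') (Sr'' : Step Y'' Z'') (S'' : Step X'' Y'') (F : Ses Y' Y Y'') :
    Nonempty (Σ' (X : ModuleCat.{u} R) (_ : Ses X' X X''), Step X Y) := by
  haveI := S'.hP
  haveI := S''.hP
  obtain ⟨e, he⟩ := extend_along F Sr'' S'.P (quasiProjective_of_projective _ S'.hP) S'.ι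
  have heapp : ∀ y', e (F.i y') = S'.ι y' := fun y' => congr_app he y'
  set PP : ModuleCat.{u} R := ModuleCat.of R (S'.P × S''.P) with hPP
  set ι : Y ⟶ PP := ModuleCat.ofHom (LinearMap.prod e.hom
    (S''.ι.hom.comp F.p.hom)) with hι
  have hιapp : ∀ y : Y, (ι y : S'.P × S''.P) = (e y, S''.ι (F.p y)) := fun y => rfl
  have hιinj : Function.Injective ι := by
    intro u v huv
    have h1 : (ι u : S'.P × S''.P) = ι v := by rw [huv]
    rw [hιapp, hιapp] at h1
    have h2 : F.p u = F.p v := S''.inj (congrArg Prod.snd h1)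
    have h3 : F.p (u - v) = 0 := by rw [map_sub, h2, sub_self]
    obtain ⟨y', hy'⟩ := (F.exact _).mp h3
    have h1a : e u = e v := congrArg Prod.fst h1
    have h4 : e (u - v) = 0 := by rw [map_sub, h1a, sub_self]
    rw [← hy', heapp] at h4
    have h5 := inj_zero S'.inj h4
    have h6 : u - v = 0 := by rw [← hy', h5, map_zero]
    exact sub_eq_zero.mp h6
  set X : ModuleCat.{u} R := ModuleCat.of R ((S'.P × S''.P) ⧸ LinearMap.range ι.hom)
    with hX
  set mk : PP ⟶ X := ModuleCat.ofHom (LinearMap.range ι.hom).mkQ with hmk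
  have hmksurj : Function.Surjective mk := Submodule.mkQ_surjective _
  have hexact : Function.Exact ι mk := by
    intro v
    rw [hmk]
    show Submodule.Quotient.mk v = 0 ↔ _
    rw [Submodule.Quotient.mk_eq_zero]
    exact ⟨fun h => h, fun h => h⟩
  have hmk0 : ∀ v : PP, v ∈ Set.range ι → mk v = 0 := fun v hv => (hexact v).mpr hv
  -- the map i : X' → X
  have hkeri : ∀ pp : S'.P, S'.π pp = 0 →
      (mk.hom.comp (LinearMap.inl R S'.P S''.P)) pp = 0 := by
    intro pp hpp
    obtain ⟨y', hy'⟩ := (S'.exact _).mp hpp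
    apply hmk0
    refine ⟨F.i y', ?_⟩
    rw [hιapp, heapp, hy']
    have h1 : F.p (F.i y') = 0 := F.exact.apply_apply_eq_zero y'
    rw [h1, map_zero]
    rfl
  obtain ⟨i, hi⟩ := factor_surj S'.π
    (show S'.P ⟶ X from ModuleCat.ofHom (mk.hom.comp (LinearMap.inl R S'.P S''.P))) S'.surj hkeri
  have hiapp : ∀ pp : S'.P, i (S'.π pp) = mk ((pp, 0) : S'.P × S''.P) :=
    fun pp => congr_app hi pp
  -- the map p : X → X''
  have hkerp : ∀ v : PP, mk v = 0 →
      (S''.π.hom.comp (LinearMap.snd R S'.P S''.P)) v = 0 := by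
    intro v hv
    obtain ⟨y, hy⟩ := (hexact v).mp hv
    rw [← hy]
    show S''.π ((ι y : S'.P × S''.P)).2 = 0
    rw [hιapp]
    exact S''.exact.apply_apply_eq_zero _
  obtain ⟨p, hp⟩ := factor_surj mk
    (show PP ⟶ X'' from ModuleCat.ofHom (S''.π.hom.comp (LinearMap.snd R S'.P S''.P)))
    hmksurj hkerp
  have hpapp : ∀ v : PP, p (mk v) = S''.π (v.2 : S''.P) := fun v => congr_app hp v
  have hiinj : Function.Injective i := by
    intro u v huv
    have h0 : i (u - v) = 0 := by rw [map_sub, huv, sub_self]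
    obtain ⟨pp, hpp⟩ := S'.surj (u - v)
    rw [← hpp] at h0
    rw [hiapp] at h0
    obtain ⟨y, hy⟩ := (hexact _).mp h0
    have h1 : (ι y : S'.P × S''.P) = ((pp, 0) : S'.P × S''.P) := hy
    rw [hιapp] at h1
    have h2 : S''.ι (F.p y) = 0 := congrArg Prod.snd h1
    have h3 : F.p y = 0 := inj_zero S''.inj h2
    obtain ⟨y', hy'⟩ := (F.exact _).mp h3
    have h1a : e y = pp := congrArg Prod.fst h1
    have h4 : pp = S'.ι y' := by rw [← h1a, ← hy', heapp]
    have h5 : u - v = 0 := by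
      rw [← hpp, h4, S'.exact.apply_apply_eq_zero]
    exact sub_eq_zero.mp h5
  have hpsurj : Function.Surjective p := by
    intro x''
    obtain ⟨q, hq⟩ := S''.surj x''
    exact ⟨mk ((0, q) : S'.P × S''.P), by rw [hpapp]; exact hq⟩
  have hexact2 : Function.Exact i p := by
    intro x
    constructor
    · intro hx
      obtain ⟨v, rfl⟩ := hmksurj x
      rw [hpapp] at hx
      obtain ⟨y'', hy''⟩ := (S''.exact _).mp hx
      obtain ⟨y, hy⟩ := F.surj y''
      refine ⟨S'.π ((v.1 : S'.P) - e y), ?_⟩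
      rw [hiapp]
      have h1 : ((v.1 - e y, 0) : S'.P × S''.P) = v - ι y := by
        rw [hιapp]
        apply Prod.ext
        · rfl
        · show (0 : S''.P) = v.2 - S''.ι (F.p y)
          rw [hy, hy'']; abel
      rw [h1, map_sub]
      have h2 : mk (ι y) = 0 := hmk0 _ ⟨y, rfl⟩
      rw [h2, sub_zero]
    · rintro ⟨x', rfl⟩
      obtain ⟨pp, rfl⟩ := S'.surj x'
      rw [hiapp, hpapp]
      show S''.π 0 = 0
      rw [map_zero]
  -- extension property
  have hext : ∀ Q : ModuleCat.{u} R, QuasiProjective Q →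
      ∀ f : Y ⟶ Q, ∃ g : PP ⟶ Q, ι ≫ g = f := by
    intro Q hQ f
    obtain ⟨g', hg'⟩ := S'.ext Q hQ (F.i ≫ f)
    have hg'app : ∀ y', g' (S'.ι y') = f (F.i y') := fun y' => congr_app hg' y'
    set h : Y ⟶ Q := ModuleCat.ofHom (f.hom - g'.hom.comp e.hom) with hh
    have happ : ∀ y : Y, h y = f y - g' (e y) := fun y => rfl
    have hker : ∀ y : Y, F.p y = 0 → h y = 0 := by
      intro y hy
      obtain ⟨y', rfl⟩ := (F.exact _).mp hy
      rw [happ, heapp, hg'app, sub_self]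
    obtain ⟨hbar, hhbar⟩ := factor_surj F.p h F.surj hker
    have hhbarapp : ∀ y, hbar (F.p y) = h y := fun y => congr_app hhbar y
    obtain ⟨g'', hg''⟩ := S''.ext Q hQ hbar
    have hg''app : ∀ y'', g'' (S''.ι y'') = hbar y'' := fun y'' => congr_app hg'' y''
    refine ⟨ModuleCat.ofHom (g'.hom.comp (LinearMap.fst R S'.P S''.P)
      + g''.hom.comp (LinearMap.snd R S'.P S''.P)), ?_⟩
    ext y
    show g' ((ι y : S'.P × S''.P)).1 + g'' ((ι y : S'.P × S''.P)).2 = f y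
    rw [hιapp]
    show g' (e y) + g'' (S''.ι (F.p y)) = f y
    rw [hg''app, hhbarapp, happ]
    abel
  exact ⟨⟨X, ⟨i, p, hiinj, hpsurj, hexact2⟩,
    ⟨PP, (inferInstance : Module.Projective R (S'.P × S''.P)), ι, mk, hιinj, hmksurj,
      hexact, hext⟩⟩⟩

end QGPAux
namespace QGPAux
variable {R : Type u} [Ring R]

/-- Chain formulation of quasi-Gorenstein projectivity. -/
lemma qgp_iff_chain (M : ModuleCat.{u} R) :
    QuasiGorensteinProjective M ↔
      ∃ K : ℤ → ModuleCat.{u} R,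
        (∀ n : ℤ, Nonempty (Step (K n) (K (n + 1)))) ∧ Nonempty (M ≅ K 0) := by
  constructor
  · rintro ⟨K, P, ι, π, hP, hinj, hsurj, hex, hext, hiso⟩
    exact ⟨K, fun n => ⟨⟨P n, hP n, ι n, π n, hinj n, hsurj n, hex n, hext n⟩⟩, hiso⟩
  · rintro ⟨K, hS, hiso⟩
    have S : ∀ n : ℤ, Step (K n) (K (n + 1)) := fun n => (hS n).some
    exact ⟨K, fun n => (S n).P, fun n => (S n).ι, fun n => (S n).π, fun n => (S n).hP,
      fun n => (S n).inj, fun n => (S n).surj, fun n => (S n).exact,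
      fun n Q hQ f => (S n).ext Q hQ f, hiso⟩

/-- Transport a step along equalities of the end modules. -/
def Step.cast {X Y X₂ Y₂ : ModuleCat.{u} R} (h1 : X = X₂) (h2 : Y = Y₂) (S : Step X Y) :
    Step X₂ Y₂ := h1 ▸ h2 ▸ S

/-- Every module appearing in a complete chain is quasi-Gorenstein projective. -/
lemma chain_all_qgp (K : ℤ → ModuleCat.{u} R)
    (hS : ∀ n : ℤ, Nonempty (Step (K n) (K (n + 1)))) (m : ℤ) :
    QuasiGorensteinProjective (K m) := by
  rw [qgp_iff_chain]
  refine ⟨fun n => K (n + m), fun n => ?_, ⟨eqToIso (congrArg K (zero_add m).symm)⟩⟩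
  obtain ⟨S⟩ := hS (n + m)
  exact ⟨S.cast rfl (congrArg K (by ring))⟩

section Chain

variable (K' K'' : ℤ → ModuleCat.{u} R)
variable (S' : ∀ n : ℤ, Step (K' n) (K' (n + 1))) (S'' : ∀ n : ℤ, Step (K'' n) (K'' (n + 1)))
variable (M : ModuleCat.{u} R) (F0 : Ses (K' 0) M (K'' 0))


/-- One forward step in the horseshoe construction. -/
noncomputable def nxt (n : ℤ) (d : Σ' (Y : ModuleCat.{u} R), Ses (K' n) Y (K'' n)) :
    Σ' (Y₂ : ModuleCat.{u} R) (_ : Ses (K' (n + 1)) Y₂ (K'' (n + 1))), Step d.1 Y₂ :=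
  (stepA (S' n) (S'' n) d.2).some

/-- One backward step in the horseshoe construction. -/
noncomputable def prv (n : ℤ)
    (d : Σ' (Y : ModuleCat.{u} R), Ses (K' (n + 1)) Y (K'' (n + 1))) :
    Σ' (Y₂ : ModuleCat.{u} R) (_ : Ses (K' n) Y₂ (K'' n)), Step Y₂ d.1 :=
  (stepB (S' n) (S'' (n + 1)) (S'' n) d.2).some

/-- The forward half of the glued chain. -/
noncomputable def fF :
    ∀ k : ℕ, Σ' (Y : ModuleCat.{u} R), Ses (K' (Int.ofNat k)) Y (K'' (Int.ofNat k))
  | 0 => ⟨M, F0⟩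
  | (k + 1) =>
    ⟨(nxt K' K'' S' S'' (Int.ofNat k) (fF k)).1, (nxt K' K'' S' S'' (Int.ofNat k) (fF k)).2.1⟩

/-- The backward half of the glued chain. -/
noncomputable def gG :
    ∀ k : ℕ, Σ' (Y : ModuleCat.{u} R), Ses (K' (Int.negSucc k)) Y (K'' (Int.negSucc k))
  | 0 =>
    ⟨(prv K' K'' S' S'' (Int.negSucc 0) (fF K' K'' S' S'' M F0 0)).1,
     (prv K' K'' S' S'' (Int.negSucc 0) (fF K' K'' S' S'' M F0 0)).2.1⟩
  | (k + 1) =>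
    ⟨(prv K' K'' S' S'' (Int.negSucc (k + 1)) (gG k)).1,
     (prv K' K'' S' S'' (Int.negSucc (k + 1)) (gG k)).2.1⟩

/-- The glued chain. -/
noncomputable def chain : ∀ n : ℤ, Σ' (Y : ModuleCat.{u} R), Ses (K' n) Y (K'' n)
  | Int.ofNat k => fF K' K'' S' S'' M F0 k
  | Int.negSucc k => gG K' K'' S' S'' M F0 k

lemma chain_step (n : ℤ) :
    Nonempty (Step (chain K' K'' S' S'' M F0 n).1 (chain K' K'' S' S'' M F0 (n + 1)).1) := by
  match n with
  | Int.ofNat k =>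
    exact ⟨(nxt K' K'' S' S'' (Int.ofNat k) (fF K' K'' S' S'' M F0 k)).2.2⟩
  | Int.negSucc 0 =>
    exact ⟨(prv K' K'' S' S'' (Int.negSucc 0) (fF K' K'' S' S'' M F0 0)).2.2⟩
  | Int.negSucc (k + 1) =>
    exact ⟨(prv K' K'' S' S'' (Int.negSucc (k + 1)) (gG K' K'' S' S'' M F0 k)).2.2⟩

lemma chain_qgp (S' : ∀ n : ℤ, Step (K' n) (K' (n + 1)))
    (S'' : ∀ n : ℤ, Step (K'' n) (K'' (n + 1))) (F0 : Ses (K' 0) M (K'' 0)) :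
    QuasiGorensteinProjective M := by
  rw [qgp_iff_chain]
  exact ⟨fun n => (chain K' K'' S' S'' M F0 n).1, chain_step K' K'' S' S'' M F0,
    ⟨Iso.refl M⟩⟩

end Chain

/-- Quasi-Gorenstein projective modules are closed under extensions. -/
theorem qgp_of_ses {M' M M'' : ModuleCat.{u} R} (F : Ses M' M M'')
    (h' : QuasiGorensteinProjective M') (h'' : QuasiGorensteinProjective M'') :
    QuasiGorensteinProjective M := by
  rw [qgp_iff_chain] at h' h''
  obtain ⟨K', hS', ⟨e'⟩⟩ := h'
  obtain ⟨K'', hS'', ⟨e''⟩⟩ := h''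
  have S' : ∀ n : ℤ, Step (K' n) (K' (n + 1)) := fun n => (hS' n).some
  have S'' : ∀ n : ℤ, Step (K'' n) (K'' (n + 1)) := fun n => (hS'' n).some
  have hinv : ∀ x : M', e'.inv (e'.hom x) = x := fun x => congr_app e'.hom_inv_id x
  have hinv2 : ∀ x : K' 0, e'.hom (e'.inv x) = x := fun x => congr_app e'.inv_hom_id x
  have F0 : Ses (K' 0) M (K'' 0) := by
    refine ⟨e'.inv ≫ F.i, F.p ≫ e''.hom, ?_, ?_, ?_⟩
    · intro u v huv
      have h1 : F.i (e'.inv u) = F.i (e'.inv v) := huv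
      have h2 : e'.inv u = e'.inv v := F.inj h1
      rw [← hinv2 u, ← hinv2 v, h2]
    · intro z
      obtain ⟨m, hm⟩ := F.surj (e''.inv z)
      refine ⟨m, ?_⟩
      show e''.hom (F.p m) = z
      rw [hm]
      exact congr_app e''.inv_hom_id z
    · intro y
      constructor
      · intro hy
        have hy' : e''.hom (F.p y) = 0 := hy
        have h1 : F.p y = 0 := by
          have h2 := congrArg e''.inv hy'
          rw [map_zero] at h2
          have h3 : e''.inv (e''.hom (F.p y)) = F.p y := congr_app e''.hom_inv_id (F.p y)
          rw [← h3]
          exact h2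
        obtain ⟨m', hm'⟩ := (F.exact y).mp h1
        refine ⟨e'.hom m', ?_⟩
        show F.i (e'.inv (e'.hom m')) = y
        rw [hinv, hm']
      · rintro ⟨k, rfl⟩
        show e''.hom (F.p (F.i (e'.inv k))) = 0
        rw [F.exact.apply_apply_eq_zero, map_zero]
  exact chain_qgp K' K'' M S' S'' F0

end QGPAux
open QGPAux in
/-- If `K → G₁ → G₀ → A` is an exact complex with `G₀, G₁` quasi-Gorenstein
projective, then there is an exact complex `K → P₀ → G₀' → A` with `P₀`
projective and `G₀'` quasi-Gorenstein projective. -/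
theorem exists_exact_complex_with_projective_first
    {K G₁ G₀ A K₁ : ModuleCat.{u} R}
    (a : K ⟶ G₁) (b : G₁ ⟶ K₁) (c : K₁ ⟶ G₀) (d : G₀ ⟶ A)
    (ha : Function.Injective a) (hb : Function.Surjective b)
    (hab : Function.Exact a b)
    (hc : Function.Injective c) (hd : Function.Surjective d)
    (hcd : Function.Exact c d)
    (hG₁ : QuasiGorensteinProjective G₁) (hG₀ : QuasiGorensteinProjective G₀) :
    ∃ (P₀ G₀' L : ModuleCat.{u} R)
      (a' : K ⟶ P₀) (b' : P₀ ⟶ L) (c' : L ⟶ G₀') (d' : G₀' ⟶ A),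
      Module.Projective R P₀ ∧ QuasiGorensteinProjective G₀' ∧
      Function.Injective a' ∧ Function.Surjective b' ∧ Function.Exact a' b' ∧
      Function.Injective c' ∧ Function.Surjective d' ∧ Function.Exact c' d' := by
  classical
  obtain ⟨Kc, hSc, ⟨e⟩⟩ := (qgp_iff_chain G₁).mp hG₁
  have S : Step (Kc (-1)) (Kc 0) :=
    ((hSc (-1)).some).cast rfl (congrArg Kc (by norm_num))
  have hG₁'' : QuasiGorensteinProjective (Kc (-1)) := chain_all_qgp Kc hSc (-1)
  have hinv : ∀ x : G₁, e.inv (e.hom x) = x := fun x => congr_app e.hom_inv_id x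
  have hinv2 : ∀ x : Kc 0, e.hom (e.inv x) = x := fun x => congr_app e.inv_hom_id x
  have einj : Function.Injective e.hom := fun x y h => by rw [← hinv x, ← hinv y, h]
  set P₀ : ModuleCat.{u} R := S.P with hP₀
  set ε : G₁ ⟶ P₀ := e.hom ≫ S.ι with hε
  have hεapp : ∀ g : G₁, ε g = S.ι (e.hom g) := fun g => rfl
  have hεinj : Function.Injective ε := fun x y h => einj (S.inj h)
  have hεπ : ∀ g : G₁, S.π (ε g) = 0 := fun g => S.exact.apply_apply_eq_zero (e.hom g)
  set a' : K ⟶ P₀ := a ≫ ε with ha'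
  have ha'app : ∀ k : K, a' k = ε (a k) := fun k => rfl
  have ha'inj : Function.Injective a' := fun x y h => ha (hεinj h)
  set D : ModuleCat.{u} R := ModuleCat.of R (P₀ ⧸ LinearMap.range a'.hom) with hD
  set b' : P₀ ⟶ D := ModuleCat.ofHom (LinearMap.range a'.hom).mkQ with hb'
  have hb'surj : Function.Surjective b' := Submodule.mkQ_surjective _
  have hexab : Function.Exact a' b' := by
    intro v
    show Submodule.Quotient.mk v = 0 ↔ _
    rw [Submodule.Quotient.mk_eq_zero]
    exact ⟨fun h => h, fun h => h⟩
  have hb'0 : ∀ p : P₀, p ∈ Set.range a' → b' p = 0 := fun p hp => (hexab p).mpr hp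
  -- the map u : K₁ → D
  obtain ⟨u, hu⟩ := factor_surj b (ε ≫ b') hb (by
    intro g hg
    obtain ⟨k, hk⟩ := (hab g).mp hg
    show b' (ε g) = 0
    apply hb'0
    exact ⟨k, by rw [ha'app, hk]⟩)
  have huapp : ∀ g : G₁, u (b g) = b' (ε g) := fun g => congr_app hu g
  have huinj : Function.Injective u := by
    intro x y hxy
    obtain ⟨g₁, rfl⟩ := hb x
    obtain ⟨g₂, rfl⟩ := hb y
    have h1 : b' (ε (g₁ - g₂)) = 0 := by
      rw [map_sub, map_sub, ← huapp, ← huapp, hxy, sub_self]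
    obtain ⟨k, hk⟩ := (hexab _).mp h1
    rw [ha'app] at hk
    have h2 : a k = g₁ - g₂ := hεinj hk
    have h3 : b (g₁ - g₂) = 0 := by rw [← h2, hab.apply_apply_eq_zero]
    rw [map_sub] at h3
    exact sub_eq_zero.mp h3
  -- the map v : D → Kc (-1)
  obtain ⟨v, hv⟩ := factor_surj b' (show P₀ ⟶ Kc (-1) from S.π) hb'surj (by
    intro p hp
    obtain ⟨k, hk⟩ := (hexab p).mp hp
    rw [ha'app] at hk
    show S.π p = 0
    rw [← hk, hεπ])
  have hvapp : ∀ p : P₀, v (b' p) = S.π p := fun p => congr_app hv p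
  have hvsurj : Function.Surjective v := by
    intro y
    obtain ⟨p, hp⟩ := S.surj y
    exact ⟨b' p, by rw [hvapp, hp]⟩
  have hexuv : Function.Exact u v := by
    intro x
    constructor
    · intro hx
      obtain ⟨p, rfl⟩ := hb'surj x
      rw [hvapp] at hx
      obtain ⟨y, hy⟩ := (S.exact p).mp hx
      obtain ⟨g, hg⟩ := (fun y => ⟨e.inv y, hinv2 y⟩ : Function.Surjective e.hom) y
      refine ⟨b g, ?_⟩
      rw [huapp, hεapp, hg, hy]
    · rintro ⟨k₁, rfl⟩
      obtain ⟨g, rfl⟩ := hb k₁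
      rw [huapp, hvapp, hεπ]
  -- the pushout G' of c : K₁ → G₀ and u : K₁ → D
  set w : K₁ →ₗ[R] (G₀ × D : Type u) :=
    LinearMap.prod c.hom (-u.hom) with hw
  have hwapp : ∀ k : K₁, w k = ((c k : G₀), (-(u k) : D)) := fun k => rfl
  set G' : ModuleCat.{u} R := ModuleCat.of R ((G₀ × D) ⧸ LinearMap.range w) with hG'
  set mk2 : ModuleCat.of R (G₀ × D) ⟶ G' := ModuleCat.ofHom (LinearMap.range w).mkQ with hmk2
  have hmk2surj : Function.Surjective mk2 := Submodule.mkQ_surjective _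
  have hmk2_0 : ∀ vv : G₀ × D, vv ∈ LinearMap.range w → mk2 vv = 0 := by
    intro vv hvv
    show Submodule.Quotient.mk vv = 0
    rw [Submodule.Quotient.mk_eq_zero]
    exact hvv
  have hmk2_eq : ∀ vv vv' : G₀ × D, vv - vv' ∈ LinearMap.range w → mk2 vv = mk2 vv' := by
    intro vv vv' hvv
    show Submodule.Quotient.mk vv = Submodule.Quotient.mk vv'
    rw [Submodule.Quotient.eq]
    exact hvv
  set c' : D ⟶ G' := ModuleCat.ofHom (mk2.hom.comp (LinearMap.inr R G₀ D)) with hc'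
  have hc'app : ∀ x : D, c' x = mk2 ((0 : G₀), x) := fun x => rfl
  set d' : G' ⟶ A := ModuleCat.ofHom <| Submodule.liftQ (LinearMap.range w)
    (d.hom.comp (LinearMap.fst R G₀ D)) (by
      rintro vv ⟨k, rfl⟩
      show d ((w k).1) = 0
      rw [hwapp]
      exact hcd.apply_apply_eq_zero k) with hd'
  have hd'app : ∀ vv : G₀ × D, d' (mk2 vv) = d vv.1 := fun vv => rfl
  have hc'inj : Function.Injective c' := by
    intro x y hxy
    have h1 : mk2 ((0 : G₀), x - y) = 0 := by
      have h2 : ((0 : G₀), x - y) = ((0 : G₀), x) - ((0 : G₀), y) := by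
        apply Prod.ext <;> simp
      rw [h2, map_sub, ← hc'app, ← hc'app, hxy, sub_self]
    have h3 : ((0 : G₀), x - y) ∈ LinearMap.range w := by
      rw [← Submodule.Quotient.mk_eq_zero (LinearMap.range w)]
      exact h1
    obtain ⟨k, hk⟩ := h3
    rw [hwapp] at hk
    have h4 : c k = 0 := (congrArg Prod.fst hk)
    have h5 : k = 0 := inj_zero hc h4
    have h6 : x - y = -(u k) := (congrArg Prod.snd hk).symm
    rw [h5, map_zero, neg_zero] at h6
    exact sub_eq_zero.mp h6
  have hd'surj : Function.Surjective d' := by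
    intro z
    obtain ⟨g, hg⟩ := hd z
    exact ⟨mk2 ((g : G₀), (0 : D)), by rw [hd'app, hg]⟩
  have hexcd : Function.Exact c' d' := by
    intro z
    constructor
    · intro hz
      obtain ⟨vv, rfl⟩ := hmk2surj z
      rw [hd'app] at hz
      obtain ⟨k, hk⟩ := (hcd _).mp hz
      refine ⟨vv.2 + u k, ?_⟩
      rw [hc'app]
      apply (hmk2_eq _ _ _).symm
      refine ⟨k, ?_⟩
      rw [hwapp]
      apply Prod.ext
      · show c k = vv.1 - 0
        rw [hk, sub_zero]
      · show -(u k) = vv.2 - (vv.2 + u k)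
        abel
    · rintro ⟨x, rfl⟩
      rw [hc'app, hd'app, map_zero]
  -- the extension 0 → G₀ → G' → Kc (-1) → 0
  have SesG : Ses G₀ G' (Kc (-1)) := by
    refine ⟨ModuleCat.ofHom (mk2.hom.comp (LinearMap.inl R G₀ D)),
      ModuleCat.ofHom <| Submodule.liftQ (LinearMap.range w)
        (v.hom.comp (LinearMap.snd R G₀ D)) (by
          rintro vv ⟨k, rfl⟩
          show v ((w k).2) = 0
          rw [hwapp]
          show v (-(u k)) = 0
          rw [map_neg, (hexuv (u k)).mpr ⟨k, rfl⟩, neg_zero]), ?_, ?_, ?_⟩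
    · intro g₁ g₂ hg
      have h1 : mk2 ((g₁ - g₂ : G₀), (0 : D)) = 0 := by
        have h2 : ((g₁ - g₂ : G₀), (0 : D)) = ((g₁ : G₀), (0 : D)) - ((g₂ : G₀), (0 : D)) := by
          apply Prod.ext <;> simp
        rw [h2, map_sub]
        have h3 : mk2 ((g₁ : G₀), (0:D)) = mk2 ((g₂ : G₀), (0:D)) := hg
        rw [h3, sub_self]
      have h3 : ((g₁ - g₂ : G₀), (0 : D)) ∈ LinearMap.range w := by
        rw [← Submodule.Quotient.mk_eq_zero (LinearMap.range w)]
        exact h1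
      obtain ⟨k, hk⟩ := h3
      rw [hwapp] at hk
      have h4 : -(u k) = 0 := congrArg Prod.snd hk
      have h5 : u k = 0 := by rwa [neg_eq_zero] at h4
      have h6 : k = 0 := inj_zero huinj h5
      have h7 : c k = g₁ - g₂ := congrArg Prod.fst hk
      rw [h6, map_zero] at h7
      exact (sub_eq_zero.mp h7.symm)
    · intro y
      obtain ⟨x, hx⟩ := hvsurj y
      exact ⟨mk2 ((0 : G₀), x), by show v ((((0:G₀), x) : G₀ × D).2) = y; exact hx⟩
    · intro z
      constructor
      · intro hz
        obtain ⟨vv, rfl⟩ := hmk2surj z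
        have hz' : v vv.2 = 0 := hz
        obtain ⟨k, hk⟩ := (hexuv _).mp hz'
        refine ⟨vv.1 + c k, ?_⟩
        show mk2 ((vv.1 + c k : G₀), (0 : D)) = mk2 vv
        apply hmk2_eq
        refine ⟨k, ?_⟩
        rw [hwapp]
        apply Prod.ext
        · show c k = (vv.1 + c k) - vv.1
          abel
        · show -(u k) = 0 - vv.2
          rw [hk, zero_sub]
      · rintro ⟨g, rfl⟩
        show v ((((g : G₀), (0:D)) : G₀ × D).2) = 0
        rw [map_zero]
  have hQGPG' : QuasiGorensteinProjective G' := qgp_of_ses SesG hG₀ hG₁''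
  exact ⟨P₀, G', D, a', b', c', d', S.hP, hQGPG', ha'inj, hb'surj, hexab,
    hc'inj, hd'surj, hexcd⟩
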